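/- Let $h>0$, $\alpha\in(0,2)$, and let $(M_j)_{j\in\mathbb{Z}}$ be positive with $M_j\sim \langle hj\rangle^{-1-\alpha}$ (two-sided bounds with constants independent of $h$). Suppose $\|(D_h^+\sqrt M)_j^2/M_j\|_{\ell^\infty}\le A$ uniformly in $h$. Let $\beta_k^h$ satisfy $b|hk|^{-1-\alpha}\le\beta_k^h\le B|hk|^{-1-\alpha}$ for $k\neq0$ and define $\mathcal S(f,f)=\frac12\sum_{j}\sum_{k\neq0}\beta_k^h(f_j/M_j-f_{j+k}/M_{j+k})^2M_jh^2$. Then there is $C>0$ independent of $h$ such that $\mathcal S(f,f)\ge c\,|fM^{-1/2}|_{\dot H^{\alpha/2}_h}^2 - C\,\|fM^{-1/2}\|_{\ell^2_h}^2$ for some $c>0$ independent of $h$. -/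

import Mathlib

open Real

/-- Japanese bracket `⟨x⟩ = (1+x²)^{1/2}`. -/
noncomputable def jbr (x : ℝ) : ℝ := Real.sqrt (1 + x ^ 2)

/-- Forward finite difference. -/
noncomputable def Dhp (h : ℝ) (u : ℤ → ℝ) : ℤ → ℝ := fun j => (u (j + 1) - u j) / h

/-- Squared discrete `ℓ²_h` norm. -/
noncomputable def l2hSq (h : ℝ) (f : ℤ → ℝ) : ℝ := ∑' j : ℤ, (f j) ^ 2 * h

/-- Squared discrete fractional Sobolev seminorm `|g|_{Ḣ^s_h}²`. -/
noncomputable def hSemiSq (h s : ℝ) (g : ℤ → ℝ) : ℝ :=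
  ∑' p : ℤ × ℤ,
    if p.2 = 0 then 0
    else (g p.1 - g (p.1 + p.2)) ^ 2 / |h * (p.2 : ℝ)| ^ (1 + 2 * s) * h ^ 2

/-- The Dirichlet form `𝒮(f,f) = ½ ∑_{j,k≠0} β_k (f_j/M_j - f_{j+k}/M_{j+k})² M_j h²`. -/
noncomputable def symFormDiag (h : ℝ) (β : ℤ → ℝ) (M : ℤ → ℝ) (f : ℤ → ℝ) : ℝ :=
  (1 / 2) * ∑' p : ℤ × ℤ,
    if p.2 = 0 then 0
    else β p.2 * (f p.1 / M p.1 - f (p.1 + p.2) / M (p.1 + p.2)) ^ 2 * M p.1 * h ^ 2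

/-- Bernoulli-type: `s^{-a} ≥ 1 + a(1-s)` for `0 < s ≤ 1`, `a ≥ 0`. -/
lemma bern_neg {s a : ℝ} (hs : 0 < s) (hs1 : s ≤ 1) (ha : 0 ≤ a) :
    1 + a * (1 - s) ≤ s ^ (-a) := by
  rw [Real.rpow_def_of_pos hs, mul_comm]
  have h1 : Real.log s ≤ s - 1 := Real.log_le_sub_one_of_pos hs
  have h2 : 1 + (-a * Real.log s) ≤ Real.exp (-a * Real.log s) := by
    linarith [Real.add_one_le_exp (-a * Real.log s)]
  have h3 : (-a) * Real.log s = Real.log s * (-a) := by ring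
  rw [h3] at h2
  nlinarith [mul_nonneg ha (by linarith : (0:ℝ) ≤ s - 1 - Real.log s)]

/-- Convexity: `a(y-x)y^{-(1+a)} ≤ x^{-a} - y^{-a}` for `0 < x ≤ y`. -/
lemma conv_ineq {a x y : ℝ} (ha : 0 < a) (hx : 0 < x) (hxy : x ≤ y) :
    a * (y - x) * y ^ (-(1 + a)) ≤ x ^ (-a) - y ^ (-a) := by
  have hy : 0 < y := lt_of_lt_of_le hx hxy
  have hs : 0 < x / y := div_pos hx hy
  have hs1 : x / y ≤ 1 := (div_le_one hy).2 hxy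
  have hb := bern_neg hs hs1 ha.le
  have hxe : x ^ (-a) = (x / y) ^ (-a) * y ^ (-a) := by
    rw [← Real.mul_rpow (le_of_lt hs) hy.le, div_mul_cancel₀]
    exact ne_of_gt hy
  have hyp : (0:ℝ) < y ^ (-a) := Real.rpow_pos_of_pos hy _
  have key : (1 + a * (1 - x / y)) * y ^ (-a) ≤ x ^ (-a) := by
    rw [hxe]
    exact mul_le_mul_of_nonneg_right hb hyp.le
  have hexp : y ^ (-(1 + a)) = y ^ (-a) * y⁻¹ := by
    rw [show (-(1 + a)) = -a + (-1) by ring, Real.rpow_add hy, Real.rpow_neg_one]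
  rw [hexp]
  have hfrac : 1 - x / y = (y - x) / y := by field_simp
  rw [hfrac] at key
  have heq : (1 + a * ((y - x) / y)) * y ^ (-a)
      = y ^ (-a) + a * (y - x) * (y ^ (-a) * y⁻¹) := by
    rw [div_eq_mul_inv]; ring
  rw [heq] at key
  linarith

/-- Concavity: `t(y-x)y^{t-1} ≤ y^t - x^t` for `0 ≤ x ≤ y`, `0 < y`, `0 < t ≤ 1`. -/
lemma conc_ineq {t x y : ℝ} (ht : 0 < t) (ht1 : t ≤ 1) (hx : 0 ≤ x) (hxy : x ≤ y) (hy : 0 < y) :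
    t * (y - x) * y ^ (t - 1) ≤ y ^ t - x ^ t := by
  have hyt : (0:ℝ) < y ^ t := Real.rpow_pos_of_pos hy _
  have hexp : y ^ (t - 1) = y ^ t * y⁻¹ := by
    rw [show t - 1 = t + (-1) by ring, Real.rpow_add hy, Real.rpow_neg_one]
  have hs : (0:ℝ) ≤ x / y := div_nonneg hx hy.le
  have hamgm : (x / y) ^ t * 1 ^ (1 - t) ≤ t * (x / y) + (1 - t) * 1 :=
    Real.geom_mean_le_arith_mean2_weighted ht.le (by linarith) hs zero_le_one (by ring)
  rw [Real.one_rpow, mul_one, mul_one] at hamgm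
  have hxt : x ^ t = (x / y) ^ t * y ^ t := by
    rw [← Real.mul_rpow hs hy.le, div_mul_cancel₀]
    exact ne_of_gt hy
  have key : x ^ t ≤ (t * (x / y) + (1 - t)) * y ^ t := by
    rw [hxt]; exact mul_le_mul_of_nonneg_right hamgm hyt.le
  rw [hexp]
  have hfrac : x / y = x * y⁻¹ := div_eq_mul_inv x y
  rw [hfrac] at key
  have hyy : y * y⁻¹ = 1 := mul_inv_cancel₀ (ne_of_gt hy)
  have heq : (t * (x * y⁻¹) + (1 - t)) * y ^ t
      = y ^ t - t * (y - x) * (y ^ t * y⁻¹) + (t * (y * y⁻¹) - t) * y ^ t := by ring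
  rw [heq, hyy] at key
  simp at key
  linarith

lemma rpow_anti {u v c : ℝ} (hu : 0 < u) (huv : u ≤ v) (hc : 0 ≤ c) :
    v ^ (-c) ≤ u ^ (-c) := by
  have hv : 0 < v := lt_of_lt_of_le hu huv
  rw [Real.rpow_neg hu.le, Real.rpow_neg hv.le]
  exact inv_anti₀ (Real.rpow_pos_of_pos hu c) (Real.rpow_le_rpow hu.le huv hc)

/-- Generic telescoping bound for sums over ℕ. -/
lemma step_sum {d a : ℕ → ℝ} {c : ℝ} (hd : ∀ n, 0 ≤ d n) (h0 : d 0 ≤ a 0)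
    (hstep : ∀ n, d (n + 1) ≤ a (n + 1) - a n) (hac : ∀ n, a n ≤ c) :
    Summable d ∧ ∑' n, d n ≤ c := by
  have hpart : ∀ n, ∑ i ∈ Finset.range (n + 1), d i ≤ a n := by
    intro n
    induction n with
    | zero => simpa using h0
    | succ n ih =>
        rw [Finset.sum_range_succ]
        have := hstep n
        linarith
  have hc : ∀ n, ∑ i ∈ Finset.range n, d i ≤ c := by
    intro n
    cases n with
    | zero =>
        simp only [Finset.range_zero, Finset.sum_empty]
        calc (0:ℝ) ≤ d 0 := hd 0
        _ ≤ a 0 := h0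
        _ ≤ c := hac 0
    | succ n => exact (hpart n).trans (hac n)
  exact ⟨summable_of_sum_range_le hd hc, tsum_le_of_sum_range_le hd hc⟩

/-- Near-diagonal weighted sum bound. -/
lemma near_sum {α h : ℝ} (hα0 : 0 < α) (hα2 : α < 2) (hh : 0 < h) :
    Summable (fun n : ℕ => if n = 0 then 0 else if h * n ≤ 1 then h * (h * n) ^ (1 - α) else 0)
      ∧ ∑' n : ℕ, (if n = 0 then 0 else if h * n ≤ 1 then h * (h * n) ^ (1 - α) else 0)
        ≤ 2 / (2 - α) := by
  set t : ℝ := 1 - α / 2 with ht_def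
  have ht : 0 < t := by simp only [ht_def]; linarith
  have ht1 : t ≤ 1 := by simp only [ht_def]; linarith
  set d : ℕ → ℝ := fun n => if n = 0 then 0 else if h * n ≤ 1 then h * (h * n) ^ (1 - α) else 0
    with hd_def
  set a : ℕ → ℝ := fun n => (2 / (2 - α)) * min ((h * n) ^ t) 1 with ha_def
  have h2α : (0:ℝ) < 2 - α := by linarith
  have hcpos : (0:ℝ) < 2 / (2 - α) := by positivity
  have hd : ∀ n, 0 ≤ d n := by
    intro n
    simp only [hd_def]
    split_ifs with h1 h2
    · exact le_rfl
    · positivity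
    · exact le_rfl
  have h0 : d 0 ≤ a 0 := by
    simp only [hd_def, ha_def]
    norm_num
    rw [Real.zero_rpow (ne_of_gt ht)]
    norm_num
  have hstep : ∀ n, d (n + 1) ≤ a (n + 1) - a n := by
    intro n
    have hx0 : (0:ℝ) ≤ h * n := by positivity
    have hy0 : (0:ℝ) < h * (n + 1 : ℕ) := by push_cast; positivity
    have hxy : h * (n:ℝ) ≤ h * ((n + 1 : ℕ):ℝ) := by
      push_cast
      nlinarith
    have hmono : (h * (n:ℝ)) ^ t ≤ (h * ((n+1:ℕ):ℝ)) ^ t := Real.rpow_le_rpow hx0 hxy ht.le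
    by_cases hc : h * ((n + 1 : ℕ):ℝ) ≤ 1
    · have hyt1 : (h * ((n+1:ℕ):ℝ)) ^ t ≤ 1 := Real.rpow_le_one hy0.le hc ht.le
      have hxt1 : (h * (n:ℝ)) ^ t ≤ 1 := hmono.trans hyt1
      have hda : d (n+1) = h * (h * ((n+1:ℕ):ℝ)) ^ (1 - α) := by
        simp only [hd_def]
        rw [if_neg (Nat.succ_ne_zero n), if_pos hc]
      have haa : a (n+1) - a n
          = (2 / (2 - α)) * ((h * ((n+1:ℕ):ℝ)) ^ t - (h * (n:ℝ)) ^ t) := by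
        simp only [ha_def, min_eq_left hyt1, min_eq_left hxt1]
        ring
      rw [hda, haa]
      have hconc := conc_ineq ht ht1 hx0 hxy hy0
      have hdiff : h * ((n+1:ℕ):ℝ) - h * (n:ℝ) = h := by push_cast; ring
      rw [hdiff] at hconc
      have hfl : (2 / (2 - α)) * (t * h * (h * ((n+1:ℕ):ℝ)) ^ (t - 1))
          = h * (h * ((n+1:ℕ):ℝ)) ^ (t - 1) := by
        have : (2 / (2 - α)) * t = 1 := by
          simp only [ht_def]; field_simp
        calc (2 / (2 - α)) * (t * h * (h * ((n+1:ℕ):ℝ)) ^ (t - 1))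
            = ((2 / (2 - α)) * t) * h * (h * ((n+1:ℕ):ℝ)) ^ (t - 1) := by ring
          _ = h * (h * ((n+1:ℕ):ℝ)) ^ (t - 1) := by rw [this]; ring
      have hexp_le : (h * ((n+1:ℕ):ℝ)) ^ (1 - α) ≤ (h * ((n+1:ℕ):ℝ)) ^ (t - 1) := by
        apply Real.rpow_le_rpow_of_exponent_ge hy0 hc
        simp only [ht_def]; linarith
      calc h * (h * ((n+1:ℕ):ℝ)) ^ (1 - α)
          ≤ h * (h * ((n+1:ℕ):ℝ)) ^ (t - 1) := by
            exact mul_le_mul_of_nonneg_left hexp_le hh.le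
        _ = (2 / (2 - α)) * (t * h * (h * ((n+1:ℕ):ℝ)) ^ (t - 1)) := hfl.symm
        _ ≤ (2 / (2 - α)) * ((h * ((n+1:ℕ):ℝ)) ^ t - (h * (n:ℝ)) ^ t) := by
            apply mul_le_mul_of_nonneg_left _ hcpos.le
            calc t * h * (h * ((n+1:ℕ):ℝ)) ^ (t - 1)
                = t * (h * ((n+1:ℕ):ℝ) - h * n) * (h * ((n+1:ℕ):ℝ)) ^ (t - 1) := by
                  rw [hdiff]
              _ ≤ _ := conc_ineq ht ht1 hx0 hxy hy0
    · have hda : d (n+1) = 0 := by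
        simp only [hd_def]
        rw [if_neg (Nat.succ_ne_zero n), if_neg hc]
      rw [hda]
      simp only [ha_def]
      have : min ((h * (n:ℝ)) ^ t) 1 ≤ min ((h * ((n+1:ℕ):ℝ)) ^ t) 1 :=
        min_le_min hmono le_rfl
      nlinarith
  have hac : ∀ n, a n ≤ 2 / (2 - α) := by
    intro n
    simp only [ha_def]
    nlinarith [min_le_right ((h * (n:ℝ)) ^ t) 1]
  exact step_sum hd h0 hstep hac

/-- Far tail weighted sum bound. -/
lemma far_sum {α h : ℝ} (hα0 : 0 < α) (hh : 0 < h) :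
    Summable (fun n : ℕ => if 1 < h * n then h * (h * n) ^ (-(1 + α)) else 0)
      ∧ ∑' n : ℕ, (if 1 < h * n then h * (h * n) ^ (-(1 + α)) else 0)
        ≤ 2 ^ (1 + α) / α := by
  set d : ℕ → ℝ := fun n => if 1 < h * n then h * (h * n) ^ (-(1 + α)) else 0 with hd_def
  set a : ℕ → ℝ := fun n => (2 ^ (1 + α) / α) * (1 - (h * n + 1) ^ (-α)) with ha_def
  have hKpos : (0:ℝ) < 2 ^ ((1:ℝ) + α) := Real.rpow_pos_of_pos two_pos _
  have hd : ∀ n, 0 ≤ d n := by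
    intro n
    simp only [hd_def]
    split_ifs with h1
    · positivity
    · exact le_rfl
  have h0 : d 0 ≤ a 0 := by
    simp only [hd_def, ha_def]
    norm_num
  have hstep : ∀ n, d (n + 1) ≤ a (n + 1) - a n := by
    intro n
    have hx0 : (0:ℝ) < h * n + 1 := by positivity
    have hxy : h * (n:ℝ) + 1 ≤ h * ((n+1:ℕ):ℝ) + 1 := by push_cast; nlinarith
    have hconv := conv_ineq hα0 hx0 hxy
    have hdiff : (h * ((n+1:ℕ):ℝ) + 1) - (h * (n:ℝ) + 1) = h := by push_cast; ring
    rw [hdiff] at hconv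
    have haa : a (n + 1) - a n
        = (2 ^ ((1:ℝ) + α) / α) * ((h * (n:ℝ) + 1) ^ (-α) - (h * ((n+1:ℕ):ℝ) + 1) ^ (-α)) := by
      simp only [ha_def]; ring
    by_cases hc : 1 < h * ((n + 1 : ℕ):ℝ)
    · have hy0 : (0:ℝ) < h * ((n+1:ℕ):ℝ) := by linarith
      have hda : d (n+1) = h * (h * ((n+1:ℕ):ℝ)) ^ (-(1 + α)) := by
        simp only [hd_def]; rw [if_pos hc]
      rw [hda]
      have h1 : h * (h * ((n+1:ℕ):ℝ)) ^ (-(1+α))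
          ≤ 2 ^ ((1:ℝ)+α) * (h * (h * ((n+1:ℕ):ℝ) + 1) ^ (-(1+α))) := by
        have hdbl : h * ((n+1:ℕ):ℝ) + 1 ≤ 2 * (h * ((n+1:ℕ):ℝ)) := by linarith
        have h2 : (2 * (h * ((n+1:ℕ):ℝ))) ^ (-(1+α)) ≤ (h * ((n+1:ℕ):ℝ) + 1) ^ (-(1+α)) :=
          rpow_anti (by linarith) hdbl (by linarith)
        have h3 : (2 * (h * ((n+1:ℕ):ℝ))) ^ (-(1+α))
            = 2 ^ (-(1+α)) * (h * ((n+1:ℕ):ℝ)) ^ (-(1+α)) :=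
          Real.mul_rpow (by norm_num) hy0.le
        have h4 : (h * ((n+1:ℕ):ℝ)) ^ (-(1+α))
            ≤ 2 ^ ((1:ℝ)+α) * (h * ((n+1:ℕ):ℝ) + 1) ^ (-(1+α)) := by
          have h5 : 2 ^ ((1:ℝ)+α) * (2 ^ (-(1+α)) * (h * ((n+1:ℕ):ℝ)) ^ (-(1+α)))
              = (h * ((n+1:ℕ):ℝ)) ^ (-(1+α)) := by
            rw [← mul_assoc, ← Real.rpow_add two_pos,
              show (1:ℝ) + α + -(1+α) = 0 by ring, Real.rpow_zero, one_mul]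
          calc (h * ((n+1:ℕ):ℝ)) ^ (-(1+α))
              = 2 ^ ((1:ℝ)+α) * (2 * (h * ((n+1:ℕ):ℝ))) ^ (-(1+α)) := by rw [h3, h5]
            _ ≤ 2 ^ ((1:ℝ)+α) * (h * ((n+1:ℕ):ℝ) + 1) ^ (-(1+α)) :=
                mul_le_mul_of_nonneg_left h2 hKpos.le
        calc h * (h * ((n+1:ℕ):ℝ)) ^ (-(1+α))
            ≤ h * (2 ^ ((1:ℝ)+α) * (h * ((n+1:ℕ):ℝ) + 1) ^ (-(1+α))) :=
              mul_le_mul_of_nonneg_left h4 hh.le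
          _ = 2 ^ ((1:ℝ)+α) * (h * (h * ((n+1:ℕ):ℝ) + 1) ^ (-(1+α))) := by ring
      have h6 : α * h * (h * ((n+1:ℕ):ℝ) + 1) ^ (-(1+α))
          ≤ (h * (n:ℝ) + 1) ^ (-α) - (h * ((n+1:ℕ):ℝ) + 1) ^ (-α) := by
        calc α * h * (h * ((n+1:ℕ):ℝ) + 1) ^ (-(1+α))
            = α * ((h * ((n+1:ℕ):ℝ) + 1) - (h * (n:ℝ) + 1)) * (h * ((n+1:ℕ):ℝ) + 1) ^ (-(1+α)) := by
              rw [hdiff]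
          _ ≤ _ := conv_ineq hα0 hx0 hxy
      calc h * (h * ((n+1:ℕ):ℝ)) ^ (-(1+α))
          ≤ 2 ^ ((1:ℝ)+α) * (h * (h * ((n+1:ℕ):ℝ) + 1) ^ (-(1+α))) := h1
        _ = (2 ^ ((1:ℝ)+α) / α) * (α * h * (h * ((n+1:ℕ):ℝ) + 1) ^ (-(1+α))) := by
            field_simp
        _ ≤ (2 ^ ((1:ℝ)+α) / α) * ((h * (n:ℝ) + 1) ^ (-α) - (h * ((n+1:ℕ):ℝ) + 1) ^ (-α)) := by
            exact mul_le_mul_of_nonneg_left h6 (div_nonneg hKpos.le hα0.le)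
        _ = a (n + 1) - a n := haa.symm
    · have hda : d (n+1) = 0 := by simp only [hd_def]; rw [if_neg hc]
      rw [hda, haa]
      have h7 := rpow_anti hx0 hxy hα0.le
      exact mul_nonneg (div_nonneg hKpos.le hα0.le) (by linarith)
  have hac : ∀ n, a n ≤ 2 ^ ((1:ℝ) + α) / α := by
    intro n
    simp only [ha_def]
    have h1 : (0:ℝ) ≤ (h * n + 1) ^ (-α) := Real.rpow_nonneg (by positivity) _
    have h2 : (0:ℝ) < 2 ^ ((1:ℝ)+α) / α := div_pos hKpos hα0
    nlinarith
  exact step_sum hd h0 hstep hac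

lemma jbr_ge_one (x : ℝ) : 1 ≤ jbr x := by
  have h := Real.sqrt_le_sqrt (show (1:ℝ) ≤ 1 + x ^ 2 by nlinarith [sq_nonneg x])
  simpa [Real.sqrt_one, jbr] using h

lemma jbr_pos (x : ℝ) : 0 < jbr x := lt_of_lt_of_le one_pos (jbr_ge_one x)

lemma jbr_shift {x y : ℝ} (hy : |y| ≤ 1) : jbr (x + y) ≤ 2 * jbr x := by
  rw [jbr, jbr, show (2:ℝ) * Real.sqrt (1 + x ^ 2) = Real.sqrt (4 * (1 + x ^ 2)) by
    rw [Real.sqrt_mul (by norm_num), show (4:ℝ) = 2^2 by norm_num, Real.sqrt_sq (by norm_num)]]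
  apply Real.sqrt_le_sqrt
  have h1 : y ^ 2 ≤ 1 := by
    have := abs_nonneg y
    nlinarith [sq_abs y]
  nlinarith [sq_nonneg (x - y), sq_nonneg (x + y)]

/-- Comparability of `M` at nearby points. -/
lemma Mratio {h α cM : ℝ} {M : ℤ → ℝ} (hh : 0 < h) (hα0 : 0 < α) (hcM : 1 ≤ cM)
    (hM2 : ∀ j : ℤ, cM⁻¹ * jbr (h * j) ^ (-(1 + α)) ≤ M j ∧
      M j ≤ cM * jbr (h * j) ^ (-(1 + α)))
    (i l : ℤ) (hil : |h * ((i : ℝ) - l)| ≤ 1) :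
    M i ≤ cM ^ 2 * 2 ^ (1 + α) * M l := by
  have hcM0 : (0:ℝ) < cM := lt_of_lt_of_le one_pos hcM
  set u : ℝ := jbr (h * i) with hu_def
  set v : ℝ := jbr (h * l) with hv_def
  have hu1 : 1 ≤ u := jbr_ge_one _
  have hv1 : 1 ≤ v := jbr_ge_one _
  have hv2u : v ≤ 2 * u := by
    have : (h : ℝ) * l = h * i + h * ((l : ℝ) - i) := by ring
    rw [hv_def, this]
    apply jbr_shift
    rw [show h * ((l:ℝ) - i) = -(h * ((i:ℝ) - l)) by ring, abs_neg]
    exact hil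
  have hhalf : v / 2 ≤ u := by linarith
  have hv2pos : (0:ℝ) < v / 2 := by linarith
  have h1 : u ^ (-(1 + α)) ≤ (v / 2) ^ (-(1 + α)) := rpow_anti hv2pos hhalf (by linarith)
  have h2inv : ((2:ℝ)⁻¹) ^ (-(1 + α)) = 2 ^ (1 + α) := by
    rw [Real.inv_rpow (by norm_num : (0:ℝ) ≤ 2), Real.rpow_neg (by norm_num : (0:ℝ) ≤ 2),
      inv_inv]
  have h2 : (v / 2) ^ (-(1 + α)) = 2 ^ (1 + α) * v ^ (-(1 + α)) := by
    rw [div_eq_mul_inv, Real.mul_rpow (by linarith) (by norm_num), h2inv]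
    ring
  have hMi : M i ≤ cM * u ^ (-(1 + α)) := (hM2 i).2
  have hMl : v ^ (-(1 + α)) ≤ cM * M l := by
    have := (hM2 l).1
    calc v ^ (-(1 + α)) = cM * (cM⁻¹ * v ^ (-(1 + α))) := by
          field_simp
      _ ≤ cM * M l := mul_le_mul_of_nonneg_left this hcM0.le
  have hKpos : (0:ℝ) < 2 ^ ((1:ℝ) + α) := Real.rpow_pos_of_pos two_pos _
  calc M i ≤ cM * u ^ (-(1 + α)) := hMi
    _ ≤ cM * (2 ^ (1 + α) * v ^ (-(1 + α))) := by
        apply mul_le_mul_of_nonneg_left _ hcM0.le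
        rw [← h2]; exact h1
    _ ≤ cM * (2 ^ (1 + α) * (cM * M l)) := by
        apply mul_le_mul_of_nonneg_left _ hcM0.le
        exact mul_le_mul_of_nonneg_left hMl hKpos.le
    _ = cM ^ 2 * 2 ^ (1 + α) * M l := by ring

lemma tele_abs (u : ℤ → ℝ) (m : ℤ) (n : ℕ) (c : ℝ)
    (hc : ∀ i : ℕ, i < n → |u (m + i + 1) - u (m + i)| ≤ c) :
    |u (m + n) - u m| ≤ n * c := by
  induction n with
  | zero => simp
  | succ n ih =>
      have h1 : |u (m + n) - u m| ≤ n * c := ih (fun i hi => hc i (by omega))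
      have h2 : |u (m + n + 1) - u (m + n)| ≤ c := hc n (by omega)
      have h3 : (m : ℤ) + ((n : ℕ) + 1 : ℕ) = m + n + 1 := by push_cast; ring
      rw [h3]
      push_cast
      calc |u (m + n + 1) - u m|
          ≤ |u (m + n + 1) - u (m + n)| + |u (m + n) - u m| := abs_sub_le _ _ _
        _ ≤ c + n * c := add_le_add h2 h1
        _ = (n + 1) * c := by ring
/-- Square-root ratio bound via telescoping. -/
lemma sqrtM_diff {h α cM A : ℝ} {M : ℤ → ℝ} (hh : 0 < h) (hα0 : 0 < α) (hcM : 1 ≤ cM)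
    (hA : 0 < A) (hMpos : ∀ j : ℤ, 0 < M j)
    (hM2 : ∀ j : ℤ, cM⁻¹ * jbr (h * j) ^ (-(1 + α)) ≤ M j ∧
      M j ≤ cM * jbr (h * j) ^ (-(1 + α)))
    (hD : ∀ j : ℤ, (Dhp h (fun i => Real.sqrt (M i)) j) ^ 2 / M j ≤ A)
    (j k : ℤ) (hk1 : |h * (k : ℝ)| ≤ 1) :
    (Real.sqrt (M (j + k)) - Real.sqrt (M j)) ^ 2
      ≤ (A * cM ^ 2 * 2 ^ (1 + α)) * (h * (k : ℝ)) ^ 2 * M (j + k) := by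
  set K1 : ℝ := A * cM ^ 2 * 2 ^ (1 + α) with hK1_def
  have hKpos : (0:ℝ) < 2 ^ ((1:ℝ) + α) := Real.rpow_pos_of_pos two_pos _
  have hK1pos : 0 < K1 := by
    rw [hK1_def]; positivity
  set u : ℤ → ℝ := fun i => Real.sqrt (M i) with hu_def
  set c : ℝ := h * Real.sqrt (K1 * M (j + k)) with hc_def
  have hcnn : 0 ≤ c := by rw [hc_def]; positivity
  have hpoint : ∀ i : ℤ, |h * ((i : ℝ) - ((j:ℝ) + k))| ≤ 1 → |u (i + 1) - u i| ≤ c := by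
    intro i hi
    have hDi : (Dhp h u i) ^ 2 ≤ A * M i := by
      have := hD i
      rw [div_le_iff₀ (hMpos i)] at this
      simpa [hu_def] using this
    have hMi : M i ≤ cM ^ 2 * 2 ^ (1 + α) * M (j + k) := by
      have hcast : ((j + k : ℤ) : ℝ) = (j : ℝ) + k := by push_cast; ring
      apply Mratio hh hα0 hcM hM2 i (j + k)
      rw [hcast]; exact hi
    have hD2 : (Dhp h u i) ^ 2 ≤ K1 * M (j + k) := by
      rw [hK1_def]
      calc (Dhp h u i) ^ 2 ≤ A * M i := hDi
        _ ≤ A * (cM ^ 2 * 2 ^ (1 + α) * M (j + k)) := mul_le_mul_of_nonneg_left hMi hA.le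
        _ = A * cM ^ 2 * 2 ^ (1 + α) * M (j + k) := by ring
    have hDabs : |Dhp h u i| ≤ Real.sqrt (K1 * M (j + k)) := by
      rw [← Real.sqrt_sq_eq_abs]
      exact Real.sqrt_le_sqrt hD2
    have hdiff : u (i + 1) - u i = h * Dhp h u i := by
      rw [Dhp]
      field_simp
    rw [hdiff, abs_mul, abs_of_pos hh, hc_def]
    exact mul_le_mul_of_nonneg_left hDabs hh.le
  have hmain : |u (j + k) - u j| ≤ |(k:ℝ)| * c := by
    rcases le_or_gt 0 k with hk | hk
    · set n : ℕ := k.toNat with hn_def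
      have hkn : (n : ℤ) = k := Int.toNat_of_nonneg hk
      have habs : |u (j + n) - u j| ≤ (n : ℝ) * c := by
        apply tele_abs u j n c
        intro i hi
        apply hpoint
        have h1 : ((j + (i:ℤ) : ℤ) : ℝ) - ((j:ℝ) + k) = (i : ℝ) - (k : ℝ) := by push_cast; ring
        rw [h1]
        have h2 : (0:ℝ) ≤ (k:ℝ) - i := by
          have hik : (i : ℤ) < k := by omega
          have hik' : ((i:ℤ):ℝ) < ((k:ℤ):ℝ) := by exact_mod_cast hik
          push_cast at hik' ⊢
          linarith
        rw [abs_mul, abs_of_pos hh]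
        rw [show |(i:ℝ) - k| = (k:ℝ) - i by rw [abs_sub_comm]; exact abs_of_nonneg h2]
        have hkle : h * (k:ℝ) ≤ 1 := by
          rw [abs_mul, abs_of_pos hh] at hk1
          have : |(k:ℝ)| = (k:ℝ) := abs_of_nonneg (by exact_mod_cast hk)
          rw [this] at hk1
          exact hk1
        have : (k:ℝ) - i ≤ k := by
          have : (0:ℝ) ≤ (i:ℝ) := by positivity
          linarith
        nlinarith
      rw [show (j + k : ℤ) = j + (n : ℤ) by omega] at *
      rw [show |(k:ℝ)| = (n:ℝ) by
        rw [abs_of_nonneg (by exact_mod_cast hk)]; exact_mod_cast congrArg Int.cast hkn.symm]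
      exact habs
    · set n : ℕ := (-k).toNat with hn_def
      have hkn : (n : ℤ) = -k := Int.toNat_of_nonneg (by omega)
      have habs : |u (j + k + n) - u (j + k)| ≤ (n : ℝ) * c := by
        apply tele_abs u (j + k) n c
        intro i hi
        apply hpoint
        have h1 : ((j + k + (i:ℤ) : ℤ) : ℝ) - ((j:ℝ) + k) = (i : ℝ) := by push_cast; ring
        rw [h1]
        have h2 : ((i:ℝ)) < (n:ℝ) := by exact_mod_cast hi
        have h3 : h * (n:ℝ) = |h * (k:ℝ)| := by
          rw [abs_mul, abs_of_pos hh]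
          congr 1
          rw [show |(k:ℝ)| = -(k:ℝ) by exact abs_of_neg (by exact_mod_cast hk)]
          exact_mod_cast congrArg (Int.cast : ℤ → ℝ) hkn
        rw [abs_mul, abs_of_pos hh, abs_of_nonneg (by positivity : (0:ℝ) ≤ (i:ℝ))]
        nlinarith [hk1, h3]
      rw [show (j + k + (n:ℤ) : ℤ) = j by omega] at habs
      rw [show |(k:ℝ)| = (n:ℝ) by
        rw [show |(k:ℝ)| = -(k:ℝ) by exact abs_of_neg (by exact_mod_cast hk)]
        exact_mod_cast congrArg (Int.cast : ℤ → ℝ) hkn.symm]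
      rw [← abs_neg]
      rw [show -(u (j + k) - u j) = u j - u (j + k) by ring]
      exact habs
  have hsq : (u (j + k) - u j) ^ 2 ≤ (|(k:ℝ)| * c) ^ 2 := by
    rw [← sq_abs]
    exact pow_le_pow_left₀ (abs_nonneg _) hmain 2
  have hMnn : 0 ≤ K1 * M (j + k) := mul_nonneg hK1pos.le (hMpos _).le
  have hc2 : (|(k:ℝ)| * c) ^ 2 = K1 * (h * (k:ℝ)) ^ 2 * M (j + k) := by
    rw [hc_def]
    rw [show (|(k:ℝ)| * (h * Real.sqrt (K1 * M (j+k)))) ^ 2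
      = |(k:ℝ)| ^ 2 * h ^ 2 * Real.sqrt (K1 * M (j+k)) ^ 2 by ring]
    rw [Real.sq_sqrt hMnn, sq_abs]
    ring
  calc (u (j + k) - u j) ^ 2 ≤ (|(k:ℝ)| * c) ^ 2 := hsq
    _ = K1 * (h * (k:ℝ)) ^ 2 * M (j + k) := hc2
    _ = K1 * (h * (k:ℝ)) ^ 2 * M (j + k) := rfl
/-- Pointwise inequality, far regime. -/
lemma far_core {b w h gj gk α : ℝ} (hb : 0 < b) (hh : 0 < h) (hw : 0 < w) :
    (b/4) * ((gj - gk) ^ 2 / w ^ (1+α) * h ^ 2)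
      ≤ gj ^ 2 * h * ((b/2) * (h * w ^ (-(1+α)))) + gk ^ 2 * h * ((b/2) * (h * w ^ (-(1+α)))) := by
  have hw' : (0:ℝ) < w ^ (-(1+α)) := Real.rpow_pos_of_pos hw _
  have hdiv : (gj - gk) ^ 2 / w ^ (1+α) = (gj - gk) ^ 2 * w ^ (-(1+α)) := by
    rw [Real.rpow_neg hw.le, div_eq_mul_inv]
  rw [hdiv]
  have h1 : (gj - gk) ^ 2 ≤ 2 * gj ^ 2 + 2 * gk ^ 2 := by nlinarith [sq_nonneg (gj + gk)]
  have h2 : (0:ℝ) ≤ (b/4) * (w ^ (-(1+α)) * h ^ 2) := by positivity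
  have h3 := mul_le_mul_of_nonneg_right h1 h2
  calc (b/4) * ((gj - gk) ^ 2 * w ^ (-(1+α)) * h ^ 2)
      = (gj - gk) ^ 2 * ((b/4) * (w ^ (-(1+α)) * h ^ 2)) := by ring
    _ ≤ (2 * gj ^ 2 + 2 * gk ^ 2) * ((b/4) * (w ^ (-(1+α)) * h ^ 2)) := h3
    _ = gj ^ 2 * h * ((b/2) * (h * w ^ (-(1+α)))) + gk ^ 2 * h * ((b/2) * (h * w ^ (-(1+α)))) := by
        ring

/-- Pointwise inequality, near regime. -/
lemma near_core {h α b B K1 w βk Mj Mk fj fk gj gk sj sk a e : ℝ}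
    (hh : 0 < h) (hb : 0 < b) (hB : 0 ≤ B) (hK1 : 0 ≤ K1) (hw : 0 < w)
    (hβ1 : b * w ^ (-(1+α)) ≤ βk) (hβ2 : βk ≤ B * w ^ (-(1+α)))
    (hsj : 0 < sj) (hsk : 0 < sk) (hMj : Mj = sj * sj) (hMk : Mk = sk * sk)
    (hgj : gj = fj / sj) (hgk : gk = fk / sk)
    (ha : a = gj - gk) (he : e = gk * ((sk - sj) / sk))
    (hdiff : (sk - sj) ^ 2 ≤ K1 * w ^ 2 * Mk) :
    (b/4) * ((gj - gk) ^ 2 / w ^ (1+α) * h ^ 2)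
      ≤ (1/2) * (βk * (fj / Mj - fk / Mk) ^ 2 * Mj * h ^ 2)
        + gk ^ 2 * h * (B * K1 / 2 * (h * w ^ (1-α))) := by
  have hw' : (0:ℝ) < w ^ (-(1+α)) := Real.rpow_pos_of_pos hw _
  -- identity
  have hid : (fj / Mj - fk / Mk) ^ 2 * Mj = (a + e) ^ 2 := by
    rw [hMj, hMk, ha, he, hgj, hgk]
    field_simp
    ring
  -- error bound
  have herr : e ^ 2 ≤ K1 * w ^ 2 * gk ^ 2 := by
    have h1 : e ^ 2 = gk ^ 2 * ((sk - sj) ^ 2 / Mk) := by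
      rw [he, hMk]
      field_simp
    rw [h1]
    have h2 : (sk - sj) ^ 2 / Mk ≤ K1 * w ^ 2 := by
      rw [div_le_iff₀ (by rw [hMk]; positivity)]
      exact hdiff
    calc gk ^ 2 * ((sk - sj) ^ 2 / Mk) ≤ gk ^ 2 * (K1 * w ^ 2) :=
          mul_le_mul_of_nonneg_left h2 (sq_nonneg _)
      _ = K1 * w ^ 2 * gk ^ 2 := by ring
  -- quadratic inequality
  have hq : a ^ 2 / 2 - e ^ 2 ≤ (a + e) ^ 2 := by
    have hqid : (a + e) ^ 2 - (a ^ 2 / 2 - e ^ 2) = (1/2) * (a + 2*e) ^ 2 := by ring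
    linarith [sq_nonneg (a + 2*e), hqid]
  have hβ0 : 0 ≤ βk := le_trans (by positivity) hβ1
  have hstep : βk * (a ^ 2 / 2 - e ^ 2) ≤ βk * (a + e) ^ 2 :=
    mul_le_mul_of_nonneg_left hq hβ0
  have hstep2 : b * w ^ (-(1+α)) * (a ^ 2 / 2) ≤ βk * (a ^ 2 / 2) :=
    mul_le_mul_of_nonneg_right hβ1 (by positivity)
  have hstep3 : βk * e ^ 2 ≤ B * w ^ (-(1+α)) * e ^ 2 :=
    mul_le_mul_of_nonneg_right hβ2 (sq_nonneg _)
  have hstep4 : B * w ^ (-(1+α)) * e ^ 2 ≤ B * w ^ (-(1+α)) * (K1 * w ^ 2 * gk ^ 2) :=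
    mul_le_mul_of_nonneg_left herr (by positivity)
  -- exponent algebra : w ^ (-(1+α)) * w ^ 2 = w ^ (1 - α)
  have hexp : w ^ (-(1+α)) * w ^ (2:ℕ) = w ^ (1 - α) := by
    rw [← Real.rpow_natCast w 2, ← Real.rpow_add hw]
    congr 1
    push_cast
    ring
  -- lower bound for βk (a+e)^2
  have hkey : b * w ^ (-(1+α)) * (a ^ 2 / 2) - B * (K1 * (w ^ (1-α) * gk ^ 2))
      ≤ βk * (a + e) ^ 2 := by
    have hrw : B * w ^ (-(1+α)) * (K1 * w ^ 2 * gk ^ 2) = B * (K1 * (w ^ (1-α) * gk ^ 2)) := by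
      rw [← hexp]; ring
    linarith [hstep, hstep2, hstep3, hstep4, hrw]
  -- conclude
  have hdiv : (gj - gk) ^ 2 / w ^ (1+α) = a ^ 2 * w ^ (-(1+α)) := by
    rw [ha, Real.rpow_neg hw.le, div_eq_mul_inv]
  rw [hdiv]
  rw [show βk * (fj / Mj - fk / Mk) ^ 2 * Mj * h ^ 2
      = βk * ((fj / Mj - fk / Mk) ^ 2 * Mj) * h ^ 2 by ring, hid]
  have hfinal := mul_le_mul_of_nonneg_right hkey (sq_nonneg h)
  nlinarith [hfinal]
set_option maxHeartbeats 1600000 in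
/-- regularization estimate
`𝒮(f,f) ≥ c |f M^{-1/2}|²_{Ḣ^{α/2}_h} - C ‖f M^{-1/2}‖²_{ℓ²_h}` uniformly in `h`. -/
theorem stmt15 (α : ℝ) (hα0 : 0 < α) (hα2 : α < 2)
    (cM : ℝ) (hcM : 1 ≤ cM) (b B A : ℝ) (hb : 0 < b) (hbB : b ≤ B) (hA : 0 < A) :
    ∃ c > 0, ∃ C > 0, ∀ h : ℝ, 0 < h → ∀ M β f : ℤ → ℝ,
      (∀ j : ℤ, 0 < M j) →
      (∀ j : ℤ, cM⁻¹ * jbr (h * j) ^ (-(1 + α)) ≤ M j ∧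
        M j ≤ cM * jbr (h * j) ^ (-(1 + α))) →
      (∀ j : ℤ, (Dhp h (fun i => Real.sqrt (M i)) j) ^ 2 / M j ≤ A) →
      (∀ k : ℤ, k ≠ 0 → b * |h * (k : ℝ)| ^ (-(1 + α)) ≤ β k ∧
        β k ≤ B * |h * (k : ℝ)| ^ (-(1 + α))) →
      Summable (fun p : ℤ × ℤ =>
        if p.2 = 0 then 0
        else β p.2 * (f p.1 / M p.1 - f (p.1 + p.2) / M (p.1 + p.2)) ^ 2 * M p.1 * h ^ 2) →
      Summable (fun p : ℤ × ℤ =>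
        if p.2 = 0 then 0
        else (f p.1 / Real.sqrt (M p.1) - f (p.1 + p.2) / Real.sqrt (M (p.1 + p.2))) ^ 2 /
          |h * (p.2 : ℝ)| ^ (1 + 2 * (α / 2)) * h ^ 2) →
      Summable (fun j : ℤ => (f j / Real.sqrt (M j)) ^ 2 * h) →
      symFormDiag h β M f ≥
        c * hSemiSq h (α / 2) (fun j => f j / Real.sqrt (M j))
          - C * l2hSq h (fun j => f j / Real.sqrt (M j)) := by
  classical
  have hKpos : (0:ℝ) < 2 ^ ((1:ℝ) + α) := Real.rpow_pos_of_pos two_pos _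
  have hBpos : 0 < B := lt_of_lt_of_le hb hbB
  have hcM0 : (0:ℝ) < cM := lt_of_lt_of_le one_pos hcM
  set K1 : ℝ := A * cM ^ 2 * 2 ^ (1 + α) with hK1_def
  have hK1pos : 0 < K1 := by rw [hK1_def]; positivity
  set C₁ : ℝ := B * K1 / 2 with hC1_def
  set C₂ : ℝ := b / 2 with hC2_def
  have hC1pos : 0 < C₁ := by rw [hC1_def]; positivity
  have hC2pos : 0 < C₂ := by rw [hC2_def]; positivity
  set Kσ : ℝ := C₁ * (2 / (2 - α)) + C₂ * (2 ^ ((1:ℝ) + α) / α) with hKσ_def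
  have hKσpos : 0 < Kσ := by
    rw [hKσ_def]
    have h1 : (0:ℝ) < 2 / (2 - α) := div_pos two_pos (by linarith)
    have h2 : (0:ℝ) < 2 ^ ((1:ℝ) + α) / α := div_pos hKpos hα0
    positivity
  refine ⟨b/4, by positivity, 4 * Kσ + 1, by positivity, ?_⟩
  intro h hh M β f hMpos hM2 hD hβ hS hH hL
  -- weight function on ℕ
  set ψ : ℕ → ℝ := fun n =>
      C₁ * (if n = 0 then 0 else if h * n ≤ 1 then h * (h * n) ^ (1 - α) else 0)
    + C₂ * (if 1 < h * (n:ℝ) then h * (h * n) ^ (-(1 + α)) else 0) with hψ_def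
  obtain ⟨hnearS, hnearB⟩ := near_sum hα0 hα2 hh
  obtain ⟨hfarS, hfarB⟩ := far_sum hα0 hh
  have hψS : Summable ψ := (hnearS.mul_left C₁).add (hfarS.mul_left C₂)
  have hψnn : ∀ n, 0 ≤ ψ n := by
    intro n
    simp only [hψ_def]
    apply add_nonneg
    · apply mul_nonneg hC1pos.le
      split_ifs <;> positivity
    · apply mul_nonneg hC2pos.le
      split_ifs <;> positivity
  have hψB : ∑' n, ψ n ≤ Kσ := by
    simp only [hψ_def]
    rw [Summable.tsum_add (hnearS.mul_left C₁) (hfarS.mul_left C₂), tsum_mul_left, tsum_mul_left,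
      hKσ_def]
    have h1 := mul_le_mul_of_nonneg_left hnearB hC1pos.le
    have h2 := mul_le_mul_of_nonneg_left hfarB hC2pos.le
    linarith
  have hψ0 : ψ 0 = 0 := by
    simp only [hψ_def]
    norm_num
  -- weight on ℤ
  set σ : ℤ → ℝ := fun k => ψ k.natAbs with hσ_def
  have hσnn : ∀ k, 0 ≤ σ k := fun k => hψnn _
  have hshiftS : Summable (fun n : ℕ => ψ (n + 1)) := (summable_nat_add_iff 1).2 hψS
  have hshiftB : ∑' n : ℕ, ψ (n + 1) ≤ Kσ := by
    have h1 := Summable.tsum_eq_zero_add hψS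
    rw [hψ0, zero_add] at h1
    rw [← h1]; exact hψB
  have hpos_eq : (fun n : ℕ => σ (n : ℤ)) = ψ := by
    funext n; simp only [hσ_def, Int.natAbs_natCast]
  have hneg_eq : (fun n : ℕ => σ (-((n : ℤ) + 1))) = fun n => ψ (n + 1) := by
    funext n
    simp only [hσ_def]
    have hna : (-((n:ℤ) + 1)).natAbs = n + 1 := by omega
    rw [hna]
  have hσhas : HasSum σ ((∑' n : ℕ, ψ n) + ∑' n : ℕ, ψ (n + 1)) := by
    apply HasSum.of_nat_of_neg_add_one
    · rw [hpos_eq]; exact hψS.hasSum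
    · rw [hneg_eq]; exact hshiftS.hasSum
  have hσS : Summable σ := hσhas.summable
  have hσB : ∑' k, σ k ≤ 2 * Kσ := by
    rw [hσhas.tsum_eq]; linarith
  -- evaluating σ
  have habsk : ∀ k : ℤ, |h * (k:ℝ)| = h * (k.natAbs : ℝ) := by
    intro k
    rw [abs_mul, abs_of_pos hh, Nat.cast_natAbs, Int.cast_abs]
  have hσnear : ∀ k : ℤ, k ≠ 0 → |h * (k:ℝ)| ≤ 1 →
      σ k = C₁ * (h * |h * (k:ℝ)| ^ (1 - α)) := by
    intro k hk hk1
    simp only [hσ_def, hψ_def]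
    rw [if_neg (Int.natAbs_ne_zero.mpr hk), ← habsk k, if_pos hk1, if_neg (not_lt.2 hk1)]
    ring
  have hσfar : ∀ k : ℤ, k ≠ 0 → 1 < |h * (k:ℝ)| →
      σ k = C₂ * (h * |h * (k:ℝ)| ^ (-(1 + α))) := by
    intro k hk hk1
    simp only [hσ_def, hψ_def]
    rw [if_neg (Int.natAbs_ne_zero.mpr hk), ← habsk k, if_neg (not_le.2 hk1), if_pos hk1]
    ring
  -- the comparison functions
  set TF : ℤ × ℤ → ℝ := fun p =>
    if p.2 = 0 then 0
    else β p.2 * (f p.1 / M p.1 - f (p.1 + p.2) / M (p.1 + p.2)) ^ 2 * M p.1 * h ^ 2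
    with hTF_def
  set HfF : ℤ × ℤ → ℝ := fun p =>
    if p.2 = 0 then 0
    else (f p.1 / Real.sqrt (M p.1) - f (p.1 + p.2) / Real.sqrt (M (p.1 + p.2))) ^ 2 /
      |h * (p.2 : ℝ)| ^ (1 + 2 * (α / 2)) * h ^ 2
    with hHfF_def
  set Φ₁ : ℤ × ℤ → ℝ := fun p => (f p.1 / Real.sqrt (M p.1)) ^ 2 * h * σ p.2 with hΦ₁_def
  set Φ₂ : ℤ × ℤ → ℝ := fun p =>
    (f (p.1 + p.2) / Real.sqrt (M (p.1 + p.2))) ^ 2 * h * σ p.2 with hΦ₂_def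
  have hΦ₁nn : ∀ p, 0 ≤ Φ₁ p := by
    intro p
    simp only [hΦ₁_def]
    exact mul_nonneg (by positivity) (hσnn _)
  have hΦ₂nn : ∀ p, 0 ≤ Φ₂ p := by
    intro p
    simp only [hΦ₂_def]
    exact mul_nonneg (by positivity) (hσnn _)
  have hΦ₁S : Summable Φ₁ := by
    rw [hΦ₁_def]
    exact Summable.mul_of_nonneg hL hσS (fun j => by positivity) hσnn
  set e : ℤ × ℤ ≃ ℤ × ℤ :=
    { toFun := fun p => (p.1 + p.2, p.2)
      invFun := fun p => (p.1 - p.2, p.2)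
      left_inv := fun p => by simp
      right_inv := fun p => by simp } with he_def
  have hΦ₂e : Φ₂ = Φ₁ ∘ e := by
    funext p
    simp only [hΦ₁_def, hΦ₂_def, he_def, Function.comp, Equiv.coe_fn_mk]
  have hΦ₂S : Summable Φ₂ := by
    rw [hΦ₂e]
    exact (Equiv.summable_iff e).2 hΦ₁S
  have hΦ₂sum : ∑' p, Φ₂ p = ∑' p, Φ₁ p := by
    rw [hΦ₂e]
    exact e.tsum_eq Φ₁
  -- the ℓ² norm
  set L : ℝ := ∑' j : ℤ, (f j / Real.sqrt (M j)) ^ 2 * h with hLdef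
  have hLnn : 0 ≤ L := by
    rw [hLdef]
    exact tsum_nonneg (fun j => by positivity)
  have hσtnn : 0 ≤ ∑' k, σ k := tsum_nonneg hσnn
  have hΦ₁B : ∑' p, Φ₁ p ≤ L * ∑' k, σ k := by
    apply Summable.tsum_le_of_sum_le hΦ₁S
    intro s
    have hsub : s ⊆ (s.image Prod.fst) ×ˢ (s.image Prod.snd) := Finset.subset_product
    have h1 : ∑ p ∈ s, Φ₁ p ≤ ∑ p ∈ (s.image Prod.fst) ×ˢ (s.image Prod.snd), Φ₁ p :=
      Finset.sum_le_sum_of_subset_of_nonneg hsub (fun p _ _ => hΦ₁nn p)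
    have h2 : ∑ p ∈ (s.image Prod.fst) ×ˢ (s.image Prod.snd), Φ₁ p
        = (∑ j ∈ s.image Prod.fst, (f j / Real.sqrt (M j)) ^ 2 * h)
          * (∑ k ∈ s.image Prod.snd, σ k) := by
      rw [Finset.sum_mul_sum, Finset.sum_product]
    have h3 : ∑ j ∈ s.image Prod.fst, (f j / Real.sqrt (M j)) ^ 2 * h ≤ L := by
      rw [hLdef]
      exact hL.sum_le_tsum _ (fun j _ => by positivity)
    have h4 : ∑ k ∈ s.image Prod.snd, σ k ≤ ∑' k, σ k :=
      hσS.sum_le_tsum _ (fun k _ => hσnn k)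
    calc ∑ p ∈ s, Φ₁ p ≤ _ := h1
      _ = _ := h2
      _ ≤ L * ∑' k, σ k := by
          apply mul_le_mul h3 h4 (Finset.sum_nonneg (fun k _ => hσnn k)) hLnn
  -- the key pointwise estimate
  have key : ∀ p : ℤ × ℤ, (b/4) * HfF p ≤ (1/2) * TF p + (Φ₁ p + Φ₂ p) := by
    rintro ⟨j, k⟩
    by_cases hk : k = 0
    · simp only [hHfF_def, hTF_def, hk, if_pos rfl]
      have h1 := hΦ₁nn (j, k)
      have h2 := hΦ₂nn (j, k)
      simp only [hk] at h1 h2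
      linarith
    · have hw0 : 0 < |h * (k:ℝ)| := by
        rw [abs_mul, abs_of_pos hh]
        have hkne : (k:ℝ) ≠ 0 := Int.cast_ne_zero.2 hk
        have : 0 < |(k:ℝ)| := abs_pos.2 hkne
        positivity
      have hexp_eq : (1:ℝ) + 2 * (α / 2) = 1 + α := by ring
      by_cases hfar : 1 < |h * (k:ℝ)|
      · -- far regime
        have hTnn : 0 ≤ TF (j, k) := by
          simp only [hTF_def, if_neg hk]
          have hβk := (hβ k hk).1
          have hβ0 : 0 ≤ β k := le_trans (by positivity) hβk
          have hM0 := (hMpos j).le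
          positivity
        have hfc := far_core (b := b) (w := |h * (k:ℝ)|) (h := h)
          (gj := f j / Real.sqrt (M j)) (gk := f (j + k) / Real.sqrt (M (j + k)))
          (α := α) hb hh hw0
        simp only [hHfF_def, hΦ₁_def, hΦ₂_def, if_neg hk]
        rw [hexp_eq, hσfar k hk hfar, hC2_def]
        linarith [hfc, hTnn]
      · -- near regime
        push_neg at hfar
        have hβk := hβ k hk
        have hdiff := sqrtM_diff hh hα0 hcM hA hMpos hM2 hD j k hfar
        rw [show (h * (k:ℝ)) ^ 2 = |h * (k:ℝ)| ^ 2 from (sq_abs _).symm] at hdiff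
        rw [← hK1_def] at hdiff
        have hcore := near_core (h := h) (α := α) (b := b) (B := B) (K1 := K1)
          (w := |h * (k:ℝ)|) (βk := β k) (Mj := M j) (Mk := M (j + k))
          (fj := f j) (fk := f (j + k))
          (gj := f j / Real.sqrt (M j)) (gk := f (j + k) / Real.sqrt (M (j + k)))
          (sj := Real.sqrt (M j)) (sk := Real.sqrt (M (j + k)))
          (a := f j / Real.sqrt (M j) - f (j + k) / Real.sqrt (M (j + k)))
          (e := (f (j + k) / Real.sqrt (M (j + k)))
            * ((Real.sqrt (M (j + k)) - Real.sqrt (M j)) / Real.sqrt (M (j + k))))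
          hh hb hBpos.le hK1pos.le hw0 hβk.1 hβk.2
          (Real.sqrt_pos.2 (hMpos j)) (Real.sqrt_pos.2 (hMpos (j + k)))
          (Real.mul_self_sqrt (hMpos j).le).symm (Real.mul_self_sqrt (hMpos (j + k)).le).symm
          rfl rfl rfl rfl hdiff
        simp only [hHfF_def, hTF_def, hΦ₁_def, hΦ₂_def, if_neg hk]
        rw [hexp_eq, hσnear k hk hfar, hC1_def]
        have hextra : 0 ≤ (f j / Real.sqrt (M j)) ^ 2 * h
            * (B * K1 / 2 * (h * |h * (k:ℝ)| ^ (1 - α))) := by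
          have hwnn : (0:ℝ) ≤ |h * (k:ℝ)| ^ (1 - α) := Real.rpow_nonneg (abs_nonneg _) _
          positivity
        linarith [hcore, hextra]
  -- summing up
  have hRHS_S : Summable (fun p : ℤ × ℤ => (1/2) * TF p + (Φ₁ p + Φ₂ p)) :=
    (hS.mul_left _).add (hΦ₁S.add hΦ₂S)
  have hLHS_S : Summable (fun p : ℤ × ℤ => (b/4) * HfF p) := hH.mul_left _
  have hmain := hLHS_S.tsum_le_tsum key hRHS_S
  rw [tsum_mul_left, Summable.tsum_add (hS.mul_left ((1:ℝ)/2)) (hΦ₁S.add hΦ₂S), tsum_mul_left,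
    Summable.tsum_add hΦ₁S hΦ₂S, hΦ₂sum] at hmain
  have hΦtot : ∑' p, Φ₁ p + ∑' p, Φ₁ p ≤ 4 * Kσ * L := by
    have h2 : L * ∑' k, σ k ≤ L * (2 * Kσ) := mul_le_mul_of_nonneg_left hσB hLnn
    nlinarith [hΦ₁B, h2]
  have hSform : symFormDiag h β M f = (1/2) * ∑' p, TF p := rfl
  have hHform : hSemiSq h (α / 2) (fun j => f j / Real.sqrt (M j)) = ∑' p, HfF p := rfl
  have hLform : l2hSq h (fun j => f j / Real.sqrt (M j)) = L := rfl
  rw [ge_iff_le, hSform, hHform, hLform]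
  have hlast : 4 * Kσ * L ≤ (4 * Kσ + 1) * L := by nlinarith [hLnn]
  clear_value K1 C₁ C₂ Kσ ψ σ TF HfF Φ₁ Φ₂ L
  linarith [hmain, hΦtot, hlast]
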